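/- Let X be a metrizable topological vector space, A ⊆ X, and B a dense vector subspace of X with A + B ⊆ A and A ∩ B = ∅. If A ∪ {0} contains a vector subspace of dimension equal to dim(X), then there is a dense vector subspace M of X with M ⊆ A ∪ {0} and dim(M) = dim(X). -/

import Mathlib

theorem stmt14 (X : Type*) [AddCommGroup X] [Module ℂ X] [TopologicalSpace X]
    [IsTopologicalAddGroup X] [ContinuousSMul ℂ X] [TopologicalSpace.MetrizableSpace X]
    (A : Set X) (B : Submodule ℂ X) (hBdense : Dense (B : Set X))
    (hAB : ∀ a ∈ A, ∀ b ∈ B, a + b ∈ A)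
    (hdisj : A ∩ (B : Set X) = ∅)
    (hbig : ∃ M₀ : Submodule ℂ X, (M₀ : Set X) ⊆ A ∪ {0} ∧
      Module.rank ℂ M₀ = Module.rank ℂ X) :
    ∃ M : Submodule ℂ X, Dense (M : Set X) ∧ (M : Set X) ⊆ A ∪ {0} ∧
      Module.rank ℂ M = Module.rank ℂ X := by
  obtain ⟨M₀, hM₀sub, hM₀rank⟩ := hbig
  letI : MetricSpace X := TopologicalSpace.metrizableSpaceMetric X
  by_cases hfin : Module.rank ℂ X < Cardinal.aleph0
  · -- finite dimensional case : X is trivial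
    haveI : FiniteDimensional ℂ X := Module.rank_lt_aleph0_iff.mp hfin
    have hBclosed : IsClosed (B : Set X) := Submodule.closed_of_finiteDimensional B
    have hBtop : (B : Set X) = Set.univ := by
      rw [← hBclosed.closure_eq, hBdense.closure_eq]
    have hA : A = ∅ := by rwa [hBtop, Set.inter_univ] at hdisj
    have hM0 : (M₀ : Set X) ⊆ {0} := by
      rw [hA] at hM₀sub; simpa using hM₀sub
    have hMbot : M₀ = ⊥ := by
      rw [eq_bot_iff]; intro x hx
      simpa using hM0 hx
    have hsub : Subsingleton X := by
      rw [← rank_zero_iff (R := ℂ)]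
      rw [← hM₀rank, hMbot]
      simp
    refine ⟨⊤, ?_, ?_, ?_⟩
    · simp [dense_iff_closure_eq]
    · intro x _
      right
      exact Subsingleton.elim x 0
    · simp [rank_top ℂ X]
  · push_neg at hfin
    have hκ : Cardinal.aleph0 ≤ Module.rank ℂ X := hfin
    obtain ⟨s, hs⟩ := Filter.exists_antitone_basis (nhds (0 : X))
    set J := Module.Free.ChooseBasisIndex ℂ B with hJdef
    set ι := Module.Free.ChooseBasisIndex ℂ M₀ with hιdef
    let bB : Module.Basis J ℂ B := Module.Free.chooseBasis ℂ B
    let bM : Module.Basis ι ℂ M₀ := Module.Free.chooseBasis ℂ M₀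
    have hJcard : (Cardinal.mk J) ≤ Module.rank ℂ X := by
      rw [← Module.Free.rank_eq_card_chooseBasisIndex ℂ B]
      exact Submodule.rank_le B
    have hιcard : (Cardinal.mk ι) = Module.rank ℂ X := by
      rw [← Module.Free.rank_eq_card_chooseBasisIndex ℂ M₀, hM₀rank]
    have hcard : Cardinal.mk ((J × ℕ) ⊕ ι) = Cardinal.mk ι := by
      rw [Cardinal.mk_sum, Cardinal.mk_prod]
      simp only [Cardinal.mk_nat, Cardinal.lift_id, Cardinal.lift_aleph0,
        Cardinal.lift_id']
      refine Cardinal.add_eq_right (by rw [hιcard]; exact hκ) ?_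
      calc Cardinal.mk J * Cardinal.aleph0
          ≤ Cardinal.mk J ⊔ Cardinal.aleph0 ⊔ Cardinal.aleph0 :=
            Cardinal.mul_le_max _ _
        _ ≤ Cardinal.mk ι := by
            simp only [sup_le_iff]
            rw [hιcard]
            exact ⟨⟨hJcard, hκ⟩, hκ⟩
    obtain ⟨e⟩ := Cardinal.eq.mp hcard
    -- the linearly independent family inside M₀
    let u : (J × ℕ) ⊕ ι → X := fun k => ((bM (e k) : M₀) : X)
    have humem : ∀ k, u k ∈ M₀ := fun k => (bM (e k)).2
    have hu : LinearIndependent ℂ u := by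
      have h1 : LinearIndependent ℂ (fun i : ι => ((bM i : M₀) : X)) :=
        bM.linearIndependent.map' M₀.subtype (Submodule.ker_subtype M₀)
      exact h1.comp e e.injective
    -- choose small nonzero multiples
    have hc : ∀ p : J × ℕ, ∃ t : ℂ, t ≠ 0 ∧ t • u (Sum.inl p) ∈ s p.2 := by
      intro p
      have hcont : Filter.Tendsto (fun t : ℂ => t • u (Sum.inl p)) (nhds 0) (nhds 0) := by
        have h : Filter.Tendsto (fun t : ℂ => t • u (Sum.inl p)) (nhds 0) (nhds ((0 : ℂ) • u (Sum.inl p))) := ((continuous_id.smul (continuous_const (y := u (Sum.inl p)))).tendsto (0 : ℂ))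
        simpa using h
      have hmem : {t : ℂ | t • u (Sum.inl p) ∈ s p.2} ∈ nhds (0 : ℂ) :=
        hcont (hs.toHasBasis.mem_of_mem trivial)
      have hne : ({t : ℂ | t • u (Sum.inl p) ∈ s p.2} ∩ {(0:ℂ)}ᶜ) ∈
          nhdsWithin (0:ℂ) {(0:ℂ)}ᶜ :=
        Filter.inter_mem (mem_nhdsWithin_of_mem_nhds hmem) self_mem_nhdsWithin
      obtain ⟨t, ht1, ht2⟩ := Filter.nonempty_of_mem hne
      exact ⟨t, by simpa using ht2, ht1⟩
    choose c hc0 hcs using hc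
    -- the generating family
    let v : (J × ℕ) ⊕ ι → X :=
      Sum.elim (fun p => (bB p.1 : X) + c p • u (Sum.inl p)) (fun i => u (Sum.inr i))
    refine ⟨Submodule.span ℂ (Set.range v), ?_, ?_, ?_⟩
    · -- density
      have hclos : ∀ j : J, (bB j : X) ∈ closure (Submodule.span ℂ (Set.range v) : Set X) := by
        intro j
        have htend : Filter.Tendsto (fun n : ℕ => v (Sum.inl (j, n))) Filter.atTop
            (nhds ((bB j : X))) := by
          have h0 : Filter.Tendsto (fun n : ℕ => c (j, n) • u (Sum.inl (j, n)))
              Filter.atTop (nhds (0 : X)) :=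
            hs.tendsto (fun n => hcs (j, n))
          have := h0.const_add ((bB j : X))
          simpa [v] using this
        refine mem_closure_of_tendsto htend ?_
        filter_upwards with n
        exact Submodule.subset_span ⟨Sum.inl (j, n), rfl⟩
      have hBle : (B : Set X) ⊆ closure (Submodule.span ℂ (Set.range v) : Set X) := by
        have hBspan : B ≤ (Submodule.span ℂ (Set.range v)).topologicalClosure := by
          rw [← Submodule.map_subtype_top B, ← bB.span_eq, Submodule.map_span]
          rw [Submodule.span_le]
          rintro x ⟨y, ⟨j, rfl⟩, rfl⟩
          exact hclos j
        exact fun x hx => hBspan hx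
      rw [dense_iff_closure_eq]
      apply Set.eq_univ_of_univ_subset
      rw [← hBdense.closure_eq]
      exact closure_minimal hBle isClosed_closure
    · -- contained in A ∪ {0}
      intro x hx
      rw [SetLike.mem_coe, Finsupp.mem_span_range_iff_exists_finsupp] at hx
      obtain ⟨l, hl⟩ := hx
      by_cases h0 : l = 0
      · right
        rw [← hl, h0]
        simp
      · left
        set c' : (J × ℕ) ⊕ ι → ℂ := Sum.elim (fun p => c p) (fun _ => 1) with hc'def
        have hc' : ∀ k, c' k ≠ 0 := by
          rintro (p | i)
          · exact hc0 p
          · exact one_ne_zero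
        set w : (J × ℕ) ⊕ ι → X := Sum.elim (fun p => (bB p.1 : X)) (fun _ => 0) with hwdef
        have hv : ∀ k (a : ℂ), a • v k = a • w k + (a * c' k) • u k := by
          rintro (p | i) a
          · simp [v, w, c', smul_add, mul_smul]
          · simp [v, w, c']
        have hsplit : x = (l.sum fun k a => a • w k) + (l.sum fun k a => (a * c' k) • u k) := by
          rw [← Finsupp.sum_add, ← hl]
          exact Finsupp.sum_congr fun k _ => hv k (l k)
        set bpart := l.sum fun k a => a • w k with hbpartdef
        set upart := l.sum fun k a => (a * c' k) • u k with hupartdef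
        have hbpart : bpart ∈ B := by
          apply Submodule.sum_mem
          intro k _
          apply Submodule.smul_mem
          rcases k with p | i
          · exact (bB p.1).2
          · exact B.zero_mem
        have hupartM : upart ∈ M₀ := by
          apply Submodule.sum_mem
          intro k _
          exact Submodule.smul_mem _ _ (humem k)
        have hupart0 : upart ≠ 0 := by
          let μ : ((J × ℕ) ⊕ ι) →₀ ℂ :=
            Finsupp.onFinset l.support (fun k => l k * c' k)
              (fun k h => Finsupp.mem_support_iff.mpr (fun h0 => h (by simp [h0])))
          have hμ : μ ≠ 0 := by
            obtain ⟨k, hk⟩ := Finsupp.ne_iff.mp h0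
            simp only [Finsupp.coe_zero, Pi.zero_apply] at hk
            intro h
            have hμk : μ k = 0 := by rw [h]; rfl
            rw [Finsupp.onFinset_apply] at hμk
            exact mul_ne_zero hk (hc' k) hμk
          have heq : upart = Finsupp.linearCombination ℂ u μ := by
            rw [Finsupp.linearCombination_apply,
              Finsupp.onFinset_sum _ (fun a => by simp)]
            rfl
          intro h
          exact hμ (linearIndependent_iff.mp hu μ (by rw [← heq, ← h]))
        have hupartA : upart ∈ A := by
          rcases hM₀sub hupartM with h | h
          · exact h
          · exact absurd h hupart0
        rw [hsplit, add_comm]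
        exact hAB upart hupartA bpart hbpart
    · -- rank
      refine le_antisymm (Submodule.rank_le _) ?_
      have hmem : ∀ i : ι, v (Sum.inr i) ∈ Submodule.span ℂ (Set.range v) :=
        fun i => Submodule.subset_span ⟨Sum.inr i, rfl⟩
      let f : ι → Submodule.span ℂ (Set.range v) := fun i => ⟨v (Sum.inr i), hmem i⟩
      have hf : LinearIndependent ℂ f := by
        apply LinearIndependent.of_comp (Submodule.span ℂ (Set.range v)).subtype
        have : LinearIndependent ℂ (u ∘ Sum.inr) := hu.comp Sum.inr Sum.inr_injective
        exact this
      calc Module.rank ℂ X = Cardinal.mk ι := hιcard.symm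
        _ ≤ Module.rank ℂ (Submodule.span ℂ (Set.range v)) := hf.cardinal_le_rank
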